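/- Let α = (α_0,...,α_{n-1}) ∈ {0,1}^n, let R be its rotation class (the set of cyclic shifts of α), and let z_i be the integer whose binary expansion is the i-th rotation α(i). Define 2^n × 2^n matrices Q^0, Q^1 all of whose entries are zero except Q^{α_i}_{1+z_i, 1+z_{i+1}} = (#R)^{-1/n} for each i (indices mod n). Then Trace(∏_{i=0}^{n-1} Q^{x_i}) equals the uniform probability measure on R evaluated at x, i.e., it equals 1/#R if x ∈ R and 0 otherwise. -/

import Mathlib

open Matrix
open Fin.NatCast Fin.CommRing

lemma binsum_inj : ∀ {m : ℕ} {β γ : Fin m → Bool},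
    (∑ j : Fin m, if β j then 2 ^ (j : ℕ) else 0) =
      (∑ j : Fin m, if γ j then 2 ^ (j : ℕ) else 0) → β = γ := by
  intro m
  induction m with
  | zero => intro β γ _; funext j; exact j.elim0
  | succ m ih =>
    intro β γ h
    rw [Fin.sum_univ_succ, Fin.sum_univ_succ] at h
    simp only [Fin.val_succ, Fin.val_zero, pow_zero, pow_succ] at h
    have h2 : ∀ (δ : Fin (m+1) → Bool),
        (∑ j : Fin m, if δ j.succ then 2 ^ (j:ℕ) * 2 else 0)
        = (∑ j : Fin m, if δ j.succ then 2 ^ (j:ℕ) else 0) * 2 := by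
      intro δ; rw [Finset.sum_mul]
      exact Finset.sum_congr rfl fun j _ => by split <;> simp
    rw [h2, h2] at h
    have hb : β 0 = γ 0 ∧
        (∑ j : Fin m, if β (Fin.succ j) then 2 ^ (j:ℕ) else 0)
          = ∑ j : Fin m, if γ (Fin.succ j) then 2 ^ (j:ℕ) else 0 := by
      cases hβ : β 0 <;> cases hγ : γ 0 <;> simp [hβ, hγ] at h ⊢ <;> omega
    have ht : (fun j : Fin m => β j.succ) = fun j : Fin m => γ j.succ := ih hb.2
    funext j
    refine Fin.cases hb.1 (fun j => congrFun ht j) j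

theorem trace_representation_uniform_rotation_class (n : ℕ)
    (α : Fin (n + 1) → Bool)
    (R : Finset (Fin (n + 1) → Bool))
    (hR : R = Finset.image (fun i : Fin (n + 1) => fun j => α (j + i)) Finset.univ)
    (z : Fin (n + 1) → Fin (2 ^ (n + 1)))
    (hz : ∀ i, (z i : ℕ) = ∑ j : Fin (n + 1), if α (j + i) then 2 ^ (j : ℕ) else 0)
    (Q : Bool → Matrix (Fin (2 ^ (n + 1))) (Fin (2 ^ (n + 1))) ℂ)
    (hQ : ∀ c a b, Q c a b =
      if ∃ i : Fin (n + 1), c = α i ∧ a = z i ∧ b = z (i + 1)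
      then (((R.card : ℝ) ^ (-(1 : ℝ) / (n + 1)) : ℝ) : ℂ) else 0) :
    ∀ x : Fin (n + 1) → Bool,
      Matrix.trace ((List.ofFn fun i => Q (x i)).prod)
        = if x ∈ R then ((R.card : ℂ))⁻¹ else 0 := by
  intro x
  have hcard : 0 < R.card := by
    rw [hR]; exact Finset.card_pos.2 (Finset.univ_nonempty.image _)
  set r : ℂ := (((R.card : ℝ) ^ (-(1 : ℝ) / (n + 1)) : ℝ) : ℂ) with hr
  -- z determines the rotation
  have hrot : ∀ i i' : Fin (n+1), z i = z i' → ∀ j, α (j + i) = α (j + i') := by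
    intro i i' h j
    have hv : (z i : ℕ) = (z i' : ℕ) := by rw [h]
    rw [hz, hz] at hv
    exact congrFun (binsum_inj hv) j
  have hzrot : ∀ i i' : Fin (n+1), (∀ j, α (j + i) = α (j + i')) → z i = z i' := by
    intro i i' h
    have hv : (z i : ℕ) = (z i' : ℕ) := by
      rw [hz, hz]; exact Finset.sum_congr rfl fun j _ => by rw [h j]
    exact Fin.ext hv
  have hznext : ∀ i i' : Fin (n+1), z i = z i' → z (i + 1) = z (i' + 1) := by
    intro i i' h
    apply hzrot
    intro j
    have h4 := hrot _ _ h (j + 1)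
    have e1 : j + (i + 1) = (j + 1) + i := by ring
    have e2 : j + (i' + 1) = (j + 1) + i' := by ring
    rw [e1, e2]; exact h4
  -- the key product formula
  have key : ∀ k : ℕ, k ≤ n + 1 → ∀ (i : Fin (n+1)) (b : Fin (2^(n+1))),
      ((List.ofFn fun j : Fin k => Q (x ((j : ℕ) : Fin (n+1)))).prod) (z i) b
        = if (∀ j : ℕ, j < k → x ((j:ℕ) : Fin (n+1)) = α (i + ((j:ℕ):Fin (n+1))))
            ∧ b = z (i + ((k:ℕ):Fin (n+1)))
          then r ^ k else 0 := by
    intro k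
    induction k with
    | zero =>
      intro _ i b
      simp only [List.ofFn_zero, List.prod_nil, Matrix.one_apply, Nat.cast_zero, add_zero,
        pow_zero]
      simp [eq_comm]
    | succ k ihk =>
      intro hk i b
      have hk' : k ≤ n + 1 := Nat.le_of_succ_le hk
      rw [List.ofFn_succ', List.prod_concat, Matrix.mul_apply]
      simp only [Fin.coe_castSucc, Fin.val_last]
      have hcast : ((k+1 : ℕ) : Fin (n+1)) = ((k:ℕ) : Fin (n+1)) + 1 := by push_cast; ring
      by_cases hp : ∀ j : ℕ, j < k → x ((j:ℕ) : Fin (n+1)) = α (i + ((j:ℕ):Fin (n+1)))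
      · have hpt : (∀ j : ℕ, j < k → x ((j:ℕ) : Fin (n+1)) = α (i + ((j:ℕ):Fin (n+1)))) = True :=
          eq_true hp
        simp only [ihk hk', hpt, true_and, ite_mul, zero_mul]
        rw [Finset.sum_ite_eq' Finset.univ (z (i + ((k:ℕ):Fin (n+1))))]
        rw [if_pos (Finset.mem_univ _), hQ]
        have hiff : (∃ i' : Fin (n+1), x ((k:ℕ):Fin (n+1)) = α i'
              ∧ z (i + ((k:ℕ):Fin (n+1))) = z i' ∧ b = z (i' + 1))
            ↔ (x ((k:ℕ):Fin (n+1)) = α (i + ((k:ℕ):Fin (n+1)))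
              ∧ b = z (i + ((k:ℕ):Fin (n+1)) + 1)) := by
          constructor
          · rintro ⟨i', h1, h2, h3⟩
            have e0 : α (i + ((k:ℕ):Fin (n+1))) = α i' := by
              have := hrot _ _ h2 0; simpa using this
            exact ⟨h1.trans e0.symm, h3.trans (hznext _ _ h2).symm⟩
          · rintro ⟨h1, h2⟩
            exact ⟨i + ((k:ℕ):Fin (n+1)), h1, rfl, h2⟩
        simp only [hiff]
        have hcond : ((∀ j : ℕ, j < k+1 → x ((j:ℕ):Fin (n+1)) = α (i + ((j:ℕ):Fin (n+1))))
              ∧ b = z (i + ((k+1:ℕ):Fin (n+1))))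
            ↔ ((x ((k:ℕ):Fin (n+1)) = α (i + ((k:ℕ):Fin (n+1))))
              ∧ b = z (i + ((k:ℕ):Fin (n+1)) + 1)) := by
          rw [hcast, ← add_assoc]
          constructor
          · rintro ⟨h1, h2⟩
            exact ⟨h1 k (Nat.lt_succ_self k), h2⟩
          · rintro ⟨h1, h2⟩
            refine ⟨fun j hj => ?_, h2⟩
            rcases Nat.lt_succ_iff_lt_or_eq.1 hj with h | h
            · exact hp j h
            · subst h; exact h1
        simp only [hcond]
        split_ifs with h
        · rw [pow_succ]
        · rw [mul_zero]
      · rw [if_neg, Finset.sum_eq_zero]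
        · intro c _
          rw [ihk hk', if_neg, zero_mul]
          rintro ⟨h1, -⟩; exact hp h1
        · rintro ⟨h1, -⟩
          exact hp fun j hj => h1 j (Nat.lt_succ_of_lt hj)
  -- identify the list
  have hprod : (List.ofFn fun i => Q (x i))
      = List.ofFn fun j : Fin (n+1) => Q (x ((j:ℕ) : Fin (n+1))) := by
    congr 1; funext j; rw [Fin.cast_val_eq_self]
  have hrow : ∀ a, (¬ ∃ i, a = z i) →
      ∀ b, ((List.ofFn fun j : Fin (n+1) => Q (x ((j:ℕ):Fin (n+1)))).prod) a b = 0 := by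
    intro a ha b
    rw [List.ofFn_succ, List.prod_cons, Matrix.mul_apply]
    apply Finset.sum_eq_zero
    intro c _
    rw [hQ, if_neg, zero_mul]
    rintro ⟨i, -, hai, -⟩
    exact ha ⟨i, hai⟩
  have hN1 : ((n+1 : ℕ) : Fin (n+1)) = 0 := Fin.natCast_self _
  have hcondiff : ∀ i : Fin (n+1),
      (∀ j : ℕ, j < n+1 → x ((j:ℕ) : Fin (n+1)) = α (i + ((j:ℕ):Fin (n+1))))
        ↔ x = fun j => α (j + i) := by
    intro i
    constructor
    · intro H; funext j
      have := H j.val j.isLt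
      rwa [Fin.cast_val_eq_self, add_comm] at this
    · intro H j hj
      rw [H]
      exact congrArg α (add_comm _ _)
  have hkey : ∀ (i : Fin (n+1)) (b : Fin (2^(n+1))),
      ((List.ofFn fun j : Fin (n+1) => Q (x ((j:ℕ):Fin (n+1)))).prod) (z i) b
        = if (x = fun j => α (j + i)) ∧ b = z i then r ^ (n+1) else 0 := by
    intro i b
    rw [key (n+1) le_rfl i b, hN1, add_zero]
    simp only [hcondiff i]
  rw [hprod, Matrix.trace]
  simp only [Matrix.diag_apply]
  by_cases hx : x ∈ R
  · rw [if_pos hx]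
    obtain ⟨i₀, -, hi₀⟩ := Finset.mem_image.1 (hR ▸ hx)
    have hdiag : ∀ a : Fin (2^(n+1)),
        ((List.ofFn fun j : Fin (n+1) => Q (x ((j:ℕ):Fin (n+1)))).prod) a a
          = if a = z i₀ then r ^ (n+1) else 0 := by
      intro a
      by_cases ha : ∃ i, a = z i
      · obtain ⟨i, rfl⟩ := ha
        rw [hkey i (z i)]
        by_cases hcond : x = fun j => α (j + i)
        · have hzz : z i = z i₀ := by
            apply hzrot
            intro j
            have e1 : x j = α (j + i) := congrFun hcond j
            have e2 : x j = α (j + i₀) := (congrFun hi₀ j).symm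
            rw [← e1, e2]
          simp [hcond, hzz]
        · rw [if_neg, if_neg]
          · intro he
            apply hcond
            funext j
            have e2 : x j = α (j + i₀) := (congrFun hi₀ j).symm
            show x j = α (j + i)
            rw [e2]
            exact (hrot _ _ he j).symm
          · rintro ⟨h1, -⟩; exact hcond h1
      · rw [hrow a ha a, if_neg]
        intro he; exact ha ⟨i₀, he⟩
    rw [Finset.sum_congr rfl fun a _ => hdiag a]
    rw [Finset.sum_ite_eq' Finset.univ (z i₀), if_pos (Finset.mem_univ _)]
    -- now r ^ (n+1) = (R.card : ℂ)⁻¹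
    have hRpos : (0:ℝ) < R.card := by exact_mod_cast hcard
    rw [hr, ← Complex.ofReal_pow]
    have hreal : (((R.card : ℝ) ^ (-(1 : ℝ) / (n + 1))) ^ (n+1) : ℝ) = (R.card : ℝ)⁻¹ := by
      rw [← Real.rpow_natCast ((R.card:ℝ) ^ (-(1:ℝ)/(n+1))) (n+1), ← Real.rpow_mul hRpos.le]
      have he : (-(1:ℝ)/(n+1)) * ((n+1 : ℕ) : ℝ) = -1 := by
        have : ((n:ℝ) + 1) ≠ 0 := by positivity
        push_cast
        field_simp
      rw [he, Real.rpow_neg_one]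
    rw [hreal, Complex.ofReal_inv, Complex.ofReal_natCast]
  · rw [if_neg hx]
    apply Finset.sum_eq_zero
    intro a _
    by_cases ha : ∃ i, a = z i
    · obtain ⟨i, rfl⟩ := ha
      rw [hkey i (z i), if_neg]
      rintro ⟨h1, -⟩
      exact hx (hR ▸ Finset.mem_image.2 ⟨i, Finset.mem_univ i, h1.symm⟩)
    · exact hrow a ha a
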